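/- The set of transformations F ∈ R^∞ satisfying the pre-Zeiger property is a self-similar subsemigroup of R^∞. Moreover, if F ∈ R^∞ has the pre-Zeiger property and q⃗ = (q_n,…,q_1) is an 𝓛-chain of length ≥ 2 with q⃗F = (s_n,…,s_1), q_{n-1} = s_{n-1} and q_n 𝓡 s_n, then q_n = s_n (the Zeiger property). -/
import Mathlib


open Pointwise

/-- Green's preorder `x ≤_𝓛 y`, i.e. `x ∈ S¹y`. -/
def leL {S : Type} [Semigroup S] (x y : S) : Prop := x = y ∨ ∃ a, x = a * y
/-- Green's preorder `x ≤_𝓡 y`, i.e. `x ∈ yS¹`. -/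
def leR {S : Type} [Semigroup S] (x y : S) : Prop := x = y ∨ ∃ a, x = y * a
/-- Green's relation `𝓛`. -/
def eqL {S : Type} [Semigroup S] (x y : S) : Prop := leL x y ∧ leL y x
/-- Green's relation `𝓡`. -/
def eqR {S : Type} [Semigroup S] (x y : S) : Prop := leR x y ∧ leR y x
/-- Green's preorder `≤_𝓗`. -/
def leH {S : Type} [Semigroup S] (x y : S) : Prop := leL x y ∧ leR x y
/-- Green's relation `𝓗`. -/
def eqH {S : Type} [Semigroup S] (x y : S) : Prop := eqL x y ∧ eqR x y
/-- The 𝓗-class of `x`. -/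
def HClass {S : Type} [Semigroup S] (x : S) : Set S := {y | eqH y x}
/-- The 𝓛-class of `x`. -/
def LClass {S : Type} [Semigroup S] (x : S) : Set S := {y | eqL y x}

/-- Right multiplication by an element of `S¹ = WithOne S`, as a map `S → S`. -/
noncomputable def actW {S : Type} [Semigroup S] (q : S) (m : WithOne S) : S :=
  @dite _ (m = 1) (Classical.dec _) (fun _ => q) (fun h => q * WithOne.unone h)

/-- The monoid `R` of functions on `W`: (i) `qr ≤_𝓡 q`; (ii) `r` preserves `𝓛`;
(iii) there is `q_r ∈ W¹` with `qr = q·q_r` whenever `qr 𝓡 q`. -/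
def RMon (W : Type) [Semigroup W] : Set (W → W) :=
  {r | (∀ q, leR (r q) q) ∧ (∀ q q', eqL q q' → eqL (r q) (r q')) ∧
       ∃ qr : WithOne W, ∀ q, eqR (r q) q → r q = actW q qr}

/-- Apply an `R`-definition `d` to a word (words are read right to left, so the head of
the list is the last letter and `d` is applied to the strict suffix). -/
def applyRDef {X R : Type} (act : X → R → X) (d : List X → R) : List X → List X
  | [] => []
  | x :: q => act x (d q) :: applyRDef act d q

/-- Membership in the infinite wreath product `R^∞` for the transformation monoid
`RMon W` acting on `W` by function application. -/
def RInf {W : Type} [Semigroup W] (F : List W → List W) : Prop :=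
  ∃ d : List W → (W → W), (∀ l, d l ∈ RMon W) ∧ ∀ l, F l = applyRDef (fun x r => r x) d l

/-- The pre-Zeiger property for a transformation of words over `W`. -/
def PreZeiger {W : Type} [Semigroup W] (F : List W → List W) : Prop :=
  ∀ (qn qn1 : W) (rest : List W) (sn sn1 : W) (rest' : List W),
    F (qn :: qn1 :: rest) = sn :: sn1 :: rest' → eqR qn1 sn1 → eqR qn sn →
    ∃ t : WithOne W, actW qn1 t = sn1 ∧ actW qn t = sn

/-- An 𝓛-chain `(qₙ, …, q₁)`, encoded as the list `[qₙ, …, q₁]`. -/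
def IsLChain {W : Type} [Semigroup W] (l : List W) : Prop :=
  List.Chain' (fun a b : W => leL a b) l

section AuxLemmas

variable {S : Type} [Semigroup S]

theorem leR_trans' {x y z : S} (h1 : leR x y) (h2 : leR y z) : leR x z := by
  rcases h1 with rfl | ⟨a, rfl⟩ <;> rcases h2 with rfl | ⟨b, rfl⟩
  · exact Or.inl rfl
  · exact Or.inr ⟨b, rfl⟩
  · exact Or.inr ⟨a, rfl⟩
  · exact Or.inr ⟨b * a, mul_assoc z b a⟩

theorem actW_one' (q : S) : actW q (1 : WithOne S) = q := dif_pos rfl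

theorem actW_coe' (q u : S) : actW q (u : WithOne S) = q * u := by
  rw [actW, dif_neg (WithOne.coe_ne_one)]
  simp

theorem withOne_cases (m : WithOne S) : m = 1 ∨ ∃ u : S, m = (u : WithOne S) := by
  rcases eq_or_ne m 1 with h | h
  · exact Or.inl h
  · exact Or.inr (by obtain ⟨u, hu⟩ := WithOne.ne_one_iff_exists.mp h; exact ⟨u, hu.symm⟩)

theorem actW_mul' (q : S) (a b : WithOne S) :
    actW (actW q a) b = actW q (a * b) := by
  rcases withOne_cases a with rfl | ⟨u, rfl⟩ <;> rcases withOne_cases b with rfl | ⟨v, rfl⟩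
  · rw [one_mul, actW_one']
  · rw [one_mul, actW_one']
  · rw [mul_one, actW_one']
  · rw [actW_coe', actW_coe', ← WithOne.coe_mul, actW_coe', mul_assoc]

theorem RMon_comp {r1 r2 : S → S} (h1 : r1 ∈ RMon S) (h2 : r2 ∈ RMon S) :
    (fun q => r2 (r1 q)) ∈ RMon S := by
  obtain ⟨h1a, h1b, q1, h1c⟩ := h1
  obtain ⟨h2a, h2b, q2, h2c⟩ := h2
  refine ⟨fun q => leR_trans' (h2a (r1 q)) (h1a q),
    fun q q' hqq' => h2b _ _ (h1b _ _ hqq'), q1 * q2, fun q hq => ?_⟩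
  have hr1 : eqR (r1 q) q := ⟨h1a q, leR_trans' hq.2 (h2a (r1 q))⟩
  have hr2 : eqR (r2 (r1 q)) (r1 q) := ⟨h2a (r1 q), leR_trans' (h1a q) hq.2⟩
  show r2 (r1 q) = _
  rw [h2c _ hr2, h1c _ hr1, actW_mul']

/-- For a transformation given by an `R`-definition, the head acts by the definition. -/
theorem RInf_cons {F : List S → List S} {d : List S → (S → S)}
    (hd : ∀ l, F l = applyRDef (fun x r => r x) d l) (x : S) (q : List S) :
    F (x :: q) = d q x :: F q := by
  rw [hd, hd]; rfl

end AuxLemmas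

/-- The pre-Zeiger transformations form a self-similar subsemigroup of `R^∞`, and on
𝓛-chains they enjoy the Zeiger property. -/
theorem zeiger (W : Type) [Semigroup W] [Finite W] :
    (∀ F G : List W → List W, RInf F → PreZeiger F → RInf G → PreZeiger G →
      RInf (fun l => G (F l)) ∧ PreZeiger (fun l => G (F l))) ∧
    (∀ F : List W → List W, RInf F → PreZeiger F → ∀ a : W,
      ∃ Fa : List W → List W, (∀ β, F (β ++ [a]) = Fa β ++ F [a]) ∧
        RInf Fa ∧ PreZeiger Fa) ∧
    (∀ F : List W → List W, RInf F → PreZeiger F →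
      ∀ (qn qn1 : W) (rest : List W) (sn sn1 : W) (rest' : List W),
        IsLChain (qn :: qn1 :: rest) →
        F (qn :: qn1 :: rest) = sn :: sn1 :: rest' →
        qn1 = sn1 → eqR qn sn → qn = sn) := by
  refine ⟨?_, ?_, ?_⟩
  · -- Part 1: closure under composition
    rintro F G ⟨dF, hdF, hF⟩ hPZF ⟨dG, hdG, hG⟩ hPZG
    constructor
    · -- RInf of the composite
      refine ⟨fun l => fun x => dG (F l) (dF l x), fun l => RMon_comp (hdF l) (hdG (F l)), ?_⟩
      intro l
      induction l with
      | nil => simp only [applyRDef]; rw [hF, hG]; rfl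
      | cons x q ih =>
        show G (F (x :: q)) = _
        rw [RInf_cons hF, RInf_cons hG]
        simp only [applyRDef]
        rw [← ih]
    · -- PreZeiger of the composite
      intro qn qn1 rest sn sn1 rest' hcomp hR1 hRn
      have hFeq : F (qn :: qn1 :: rest) = dF (qn1 :: rest) qn :: dF rest qn1 :: F rest := by
        rw [RInf_cons hF, RInf_cons hF]
      set pn := dF (qn1 :: rest) qn with hpn
      set pn1 := dF rest qn1 with hpn1
      have hGeq : G (pn :: pn1 :: F rest)
          = dG (pn1 :: F rest) pn :: dG (F rest) pn1 :: G (F rest) := by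
        rw [RInf_cons hG, RInf_cons hG]
      have hcomp' : G (pn :: pn1 :: F rest) = sn :: sn1 :: rest' := by
        rw [← hFeq]; exact hcomp
      rw [hGeq] at hcomp'
      obtain ⟨hsn, hsn1, hrest'⟩ : dG (pn1 :: F rest) pn = sn ∧ dG (F rest) pn1 = sn1 ∧
          G (F rest) = rest' := by
        injection hcomp' with h1 h2
        injection h2 with h2 h3
        exact ⟨h1, h2, h3⟩
      -- Green relations
      have hpn_qn : leR pn qn := (hdF (qn1 :: rest)).1 qn
      have hpn1_qn1 : leR pn1 qn1 := (hdF rest).1 qn1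
      have hsn_pn : leR sn pn := hsn ▸ (hdG (pn1 :: F rest)).1 pn
      have hsn1_pn1 : leR sn1 pn1 := hsn1 ▸ (hdG (F rest)).1 pn1
      have eq_qn_pn : eqR qn pn := ⟨leR_trans' hRn.1 hsn_pn, hpn_qn⟩
      have eq_qn1_pn1 : eqR qn1 pn1 := ⟨leR_trans' hR1.1 hsn1_pn1, hpn1_qn1⟩
      have eq_pn_sn : eqR pn sn := ⟨leR_trans' hpn_qn hRn.1, hsn_pn⟩
      have eq_pn1_sn1 : eqR pn1 sn1 := ⟨leR_trans' hpn1_qn1 hR1.1, hsn1_pn1⟩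
      obtain ⟨t, ht1, ht2⟩ := hPZF qn qn1 rest pn pn1 (F rest) hFeq eq_qn1_pn1 eq_qn_pn
      obtain ⟨u, hu1, hu2⟩ := hPZG pn pn1 (F rest) sn sn1 rest'
        (by rw [hGeq, hsn, hsn1, hrest']) eq_pn1_sn1 eq_pn_sn
      exact ⟨t * u, by rw [← actW_mul', ht1, hu1], by rw [← actW_mul', ht2, hu2]⟩
  · -- Part 2: self-similarity
    rintro F ⟨d, hd, hF⟩ hPZ a
    refine ⟨applyRDef (fun x r => r x) (fun l => d (l ++ [a])), ?_, ?_, ?_⟩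
    · -- the decomposition equation
      intro β
      induction β with
      | nil => rfl
      | cons x q ih =>
        show F (x :: (q ++ [a])) = _
        rw [RInf_cons hF, ih]
        rfl
    · exact ⟨fun l => d (l ++ [a]), fun l => hd (l ++ [a]), fun l => rfl⟩
    · -- PreZeiger for Fa
      intro qn qn1 rest sn sn1 rest' heq hR1 hRn
      have hdec : ∀ β, F (β ++ [a]) = applyRDef (fun x r => r x) (fun l => d (l ++ [a])) β
          ++ F [a] := by
        intro β
        induction β with
        | nil => rfl
        | cons x q ih =>
          show F (x :: (q ++ [a])) = _
          rw [RInf_cons hF, ih]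
          rfl
      have hFeq : F ((qn :: qn1 :: rest) ++ [a]) = sn :: sn1 :: (rest' ++ F [a]) := by
        rw [hdec (qn :: qn1 :: rest), heq]
        rfl
      exact hPZ qn qn1 (rest ++ [a]) sn sn1 (rest' ++ F [a]) hFeq hR1 hRn
  · -- Part 3: Zeiger property on 𝓛-chains
    intro F hRI hPZ qn qn1 rest sn sn1 rest' hchain heq h1 hRn
    obtain ⟨t, ht1, ht2⟩ := hPZ qn qn1 rest sn sn1 rest' heq (h1 ▸ ⟨Or.inl rfl, Or.inl rfl⟩) hRn
    have hchain1 : leL qn qn1 := (List.isChain_cons_cons.mp hchain).1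
    rcases withOne_cases t with rfl | ⟨u, rfl⟩
    · rw [actW_one'] at ht2; exact ht2
    · rw [actW_coe'] at ht1 ht2
      rw [← h1] at ht1
      rcases hchain1 with h | ⟨b, h⟩
      · rw [← ht2, h, ht1, ← h]
      · rw [← ht2, h, mul_assoc, ht1]
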